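/- For every integer ν ≥ 1 and all nonnegative integers j ≤ k, the rational number ((2ν−1)!/ν!) · A_{k,j}(ν) is an integer; that is, A_{k,j}(ν) ∈ (ν!/(2ν−1)!)·ℤ. -/

import Mathlib

/-- `A ν k j` is the rational number `A_{k,j}(ν) = C(k,j)·(k+ν)!·ν! / ((k−j+ν)!·(j+ν)!)`. -/
def A (ν k j : ℕ) : ℚ :=
  (Nat.choose k j : ℚ) * ((k + ν).factorial : ℚ) * (ν.factorial : ℚ) /
    (((k - j + ν).factorial : ℚ) * ((j + ν).factorial : ℚ))

lemma div_small2' (q a : ℕ) (h : a < 2 * q) :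
    a / q = if q ≤ a then 1 else 0 := by
  split_ifs with h1
  · exact Nat.div_eq_of_lt_le (by omega) (by omega)
  · exact Nat.div_eq_of_lt (by omega)

lemma div_small3' (q a : ℕ) (h : a < 3 * q) :
    a / q = if 2 * q ≤ a then 2 else if q ≤ a then 1 else 0 := by
  split_ifs with h1 h2
  · exact Nat.div_eq_of_lt_le (by omega) (by omega)
  · exact Nat.div_eq_of_lt_le (by omega) (by omega)
  · exact Nat.div_eq_of_lt (by omega)

lemma key_div' (q j m ν : ℕ) (hq : 0 < q) (hν : 1 ≤ ν) :
    j / q + m / q + (j + ν) / q + (m + ν) / q ≤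
      (j + m) / q + (j + m + ν) / q + (2 * ν - 1) / q := by
  obtain ⟨a, r, hr, hj⟩ : ∃ a r, r < q ∧ j = r + q * a :=
    ⟨j / q, j % q, Nat.mod_lt _ hq, (Nat.mod_add_div j q).symm⟩
  obtain ⟨b, s, hs, hm⟩ : ∃ b s, s < q ∧ m = s + q * b :=
    ⟨m / q, m % q, Nat.mod_lt _ hq, (Nat.mod_add_div m q).symm⟩
  obtain ⟨c, t, ht, hn⟩ : ∃ c t, t < q ∧ ν = t + q * c :=
    ⟨ν / q, ν % q, Nat.mod_lt _ hq, (Nat.mod_add_div ν q).symm⟩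
  subst hj hm hn
  have e1 : (r + q * a) / q = a := by
    rw [Nat.add_mul_div_left _ _ hq, Nat.div_eq_of_lt hr, Nat.zero_add]
  have e2 : (s + q * b) / q = b := by
    rw [Nat.add_mul_div_left _ _ hq, Nat.div_eq_of_lt hs, Nat.zero_add]
  have e3 : (r + q * a + (t + q * c)) / q = (r + t) / q + (a + c) := by
    rw [show r + q * a + (t + q * c) = (r + t) + q * (a + c) by ring,
      Nat.add_mul_div_left _ _ hq]
  have e4 : (s + q * b + (t + q * c)) / q = (s + t) / q + (b + c) := by
    rw [show s + q * b + (t + q * c) = (s + t) + q * (b + c) by ring,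
      Nat.add_mul_div_left _ _ hq]
  have e5 : (r + q * a + (s + q * b)) / q = (r + s) / q + (a + b) := by
    rw [show r + q * a + (s + q * b) = (r + s) + q * (a + b) by ring,
      Nat.add_mul_div_left _ _ hq]
  have e6 : (r + q * a + (s + q * b) + (t + q * c)) / q
      = (r + s + t) / q + (a + b + c) := by
    rw [show r + q * a + (s + q * b) + (t + q * c) = (r + s + t) + q * (a + b + c) by ring,
      Nat.add_mul_div_left _ _ hq]
  rw [e1, e2, e3, e4, e5, e6]
  rcases Nat.eq_zero_or_pos t with h0 | hpos
  · subst h0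
    rcases Nat.eq_zero_or_pos c with rfl | hc
    · simp at hν
    have e7 : (2 * (0 + q * c) - 1) / q = 2 * c - 1 := by
      have hb1 : q * (2 * c - 1) = 2 * (q * c) - q := by
        rw [Nat.mul_sub]; ring_nf
      have hb2 : q ≤ q * c := Nat.le_mul_of_pos_right q hc
      rw [show 2 * (0 + q * c) - 1 = (q - 1) + q * (2 * c - 1) by omega]
      rw [Nat.add_mul_div_left _ _ hq, Nat.div_eq_of_lt (by omega), Nat.zero_add]
    rw [e7]
    simp only [Nat.add_zero, Nat.zero_add]
    rw [Nat.div_eq_of_lt hr, Nat.div_eq_of_lt hs]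
    have h0 : 0 ≤ (r + s) / q := Nat.zero_le _
    omega
  · have e7 : (2 * (t + q * c) - 1) / q = (2 * t - 1) / q + 2 * c := by
      have hb : q * (2 * c) = 2 * (q * c) := by ring
      rw [show 2 * (t + q * c) - 1 = (2 * t - 1) + q * (2 * c) by omega,
        Nat.add_mul_div_left _ _ hq]
    rw [e7, div_small2' q (r + t) (by omega), div_small2' q (s + t) (by omega),
      div_small2' q (r + s) (by omega), div_small2' q (2 * t - 1) (by omega),
      div_small3' q (r + s + t) (by omega)]
    split_ifs <;> omega

lemma fact_dvd' (ν j m : ℕ) (hν : 1 ≤ ν) :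
    j.factorial * m.factorial * ((j + ν).factorial * (m + ν).factorial) ∣
      (j + m).factorial * ((j + m + ν).factorial * (2 * ν - 1).factorial) := by
  have hD : j.factorial * m.factorial * ((j + ν).factorial * (m + ν).factorial) ≠ 0 := by
    positivity
  have hN : (j + m).factorial * ((j + m + ν).factorial * (2 * ν - 1).factorial) ≠ 0 := by
    positivity
  rw [← Nat.factorization_le_iff_dvd hD hN]
  intro p
  rcases em p.Prime with hp | hp
  · haveI : Fact p.Prime := ⟨hp⟩
    have hp1 : 1 < p := hp.one_lt
    set b := j + m + 2 * ν + 1 with hb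
    have hlog : ∀ n : ℕ, n ≤ j + m + 2 * ν → Nat.log p n < b := fun n hn =>
      lt_of_le_of_lt (Nat.log_mono_right hn) (by
        calc Nat.log p (j + m + 2 * ν) ≤ j + m + 2 * ν := Nat.log_le_self _ _
        _ < b := by omega)
    have L : ∀ n : ℕ, n ≤ j + m + 2 * ν →
        (n.factorial).factorization p = ∑ i ∈ Finset.Ico 1 b, n / p ^ i := fun n hn => by
      rw [Nat.factorization_def _ hp, padicValNat_factorial (hlog n hn)]
    rw [Nat.factorization_mul (by positivity) (by positivity),
        Nat.factorization_mul (by positivity) (by positivity),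
        Nat.factorization_mul (by positivity) (by positivity),
        Nat.factorization_mul (by positivity) (by positivity),
        Nat.factorization_mul (by positivity) (by positivity)]
    simp only [Finsupp.coe_add, Pi.add_apply]
    rw [L j (by omega), L m (by omega), L (j + ν) (by omega), L (m + ν) (by omega),
        L (j + m) (by omega), L (j + m + ν) (by omega), L (2 * ν - 1) (by omega)]
    simp only [← Finset.sum_add_distrib]
    refine Finset.sum_le_sum fun i hi => ?_
    have hq : 0 < p ^ i := Nat.pow_pos (by omega)
    have := key_div' (p ^ i) j m ν hq hν
    omega
  · simp [Nat.factorization_eq_zero_of_not_prime _ hp]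

/-- For every `ν ≥ 1` and all `j ≤ k`, `((2ν−1)!/ν!) · A_{k,j}(ν)` is an integer. -/
theorem stmt0 (ν : ℕ) (hν : 1 ≤ ν) (k j : ℕ) (hjk : j ≤ k) :
    ∃ z : ℤ, (((2 * ν - 1).factorial : ℚ) / (ν.factorial : ℚ)) * A ν k j = (z : ℚ) := by
  set m := k - j with hm
  have hk : k = j + m := by omega
  have h1 := fact_dvd' ν j m hν
  have hc : Nat.choose k j * (j.factorial * m.factorial) = k.factorial := by
    rw [← Nat.choose_mul_factorial_mul_factorial hjk, ← hm]; ring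
  have h2 : (j.factorial * m.factorial) * ((j + ν).factorial * (m + ν).factorial) ∣
      (j.factorial * m.factorial) *
        (Nat.choose k j * ((k + ν).factorial * (2 * ν - 1).factorial)) := by
    have : (j.factorial * m.factorial) *
        (Nat.choose k j * ((k + ν).factorial * (2 * ν - 1).factorial)) =
        (j + m).factorial * ((j + m + ν).factorial * (2 * ν - 1).factorial) := by
      rw [← hk, ← hc]; ring
    rw [this]
    exact h1
  have h3 : (j + ν).factorial * (m + ν).factorial ∣
      Nat.choose k j * ((k + ν).factorial * (2 * ν - 1).factorial) :=
    (Nat.mul_dvd_mul_iff_left (by positivity : 0 < j.factorial * m.factorial)).mp h2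
  obtain ⟨z, hz⟩ := h3
  refine ⟨(z : ℤ), ?_⟩
  have hz' : (Nat.choose k j : ℚ) * ((k + ν).factorial * (2 * ν - 1).factorial) =
      ((j + ν).factorial * (m + ν).factorial) * z := by
    exact_mod_cast congrArg (Nat.cast : ℕ → ℚ) hz
  rw [A, ← hm]
  have hν0 : (ν.factorial : ℚ) ≠ 0 := by positivity
  have hd1 : ((m + ν).factorial : ℚ) ≠ 0 := by positivity
  have hd2 : ((j + ν).factorial : ℚ) ≠ 0 := by positivity
  field_simp
  push_cast at hz' ⊢
  linear_combination hz'
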